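/- Discrete Skorokhod problem with oblique reflection (self-consistency of the regulator): Let (Y_k)_{k≥0}, (L_k)_{k≥0}, (φ_k)_{k≥0} be real sequences and (R_k)_{k≥0} a real sequence (representing ∑_j ∫ Q^{ij} dL^j up to time k) such that: L_0 = 0, L is non-decreasing with increments η_k = L_{k+1} − L_k ≥ 0, φ_k = Y_k + L_k − R_k ≥ 0 for all k, and η_{k−1} > 0 implies φ_k = 0. Then L_k = max_{0 ≤ l ≤ k} (R_l − Y_l)_+ for every k. -/

import Mathlib

/-- Discrete Skorokhod problem with oblique reflection: the regulator `L` with the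
complementarity condition admits the representation `L_k = max_{0 ≤ l ≤ k} (R_l − Y_l)₊`. -/
theorem discrete_oblique_skorokhod_formula (Y L φ R : ℕ → ℝ)
    (hL0 : L 0 = 0)
    (hmono : ∀ k, L k ≤ L (k + 1))
    (hφ : ∀ k, φ k = Y k + L k - R k)
    (hφpos : ∀ k, 0 ≤ φ k)
    (hcomp : ∀ k, L k < L (k + 1) → φ (k + 1) = 0) :
    ∀ k, L k = (Finset.range (k + 1)).sup' Finset.nonempty_range_add_one
      (fun l => max (R l - Y l) 0) := by
  have hRY : ∀ k, R k - Y k ≤ L k := by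
    intro k
    have := hφpos k
    rw [hφ k] at this
    linarith
  have hLpos : ∀ k, 0 ≤ L k := by
    intro k
    induction k with
    | zero => exact le_of_eq hL0.symm
    | succ n ih => exact ih.trans (hmono n)
  intro k
  induction k with
  | zero =>
    have := hRY 0
    rw [hL0] at this
    simp [hL0, max_eq_right this]
  | succ n ih =>
    have hins : Finset.range (n + 2) = insert (n + 1) (Finset.range (n + 1)) :=
      Finset.range_add_one
    rw [Finset.sup'_congr Finset.nonempty_range_add_one hins (fun _ _ => rfl),
      Finset.sup'_insert (H := Finset.nonempty_range_add_one)]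
    rw [← ih]
    rcases eq_or_lt_of_le (hmono n) with h | h
    · rw [← h]
      have h1 : max (R (n + 1) - Y (n + 1)) 0 ≤ L n := by
        rw [h]
        exact max_le (hRY (n + 1)) (hLpos (n + 1))
      exact (sup_eq_right.mpr h1).symm
    · have h0 := hcomp n h
      rw [hφ (n + 1)] at h0
      have hL1 : L (n + 1) = R (n + 1) - Y (n + 1) := by linarith
      have : L n ≤ max (R (n + 1) - Y (n + 1)) 0 := by
        rw [← hL1]
        exact le_max_of_le_left h.le
      rw [sup_eq_left.mpr this, hL1]
      exact (max_eq_left ((hLpos (n + 1)).trans_eq hL1)).symm
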